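/- arXiv:0908.2642 — 4 statements merged into one kernel-verified Lean document; each statement's English description precedes it below -/
import Mathlib

section
/- (Gowers–Cauchy–Schwarz inequality) Let G be a finite abelian group, d ≥ 1, and for each ω ∈ {0,1}^d let φ_ω : G → ℂ be a function. Then |E_{x,h_1,…,h_d ∈ G} ∏_{ω ∈ {0,1}^d} φ_ω(x + ω_1 h_1 + ⋯ + ω_d h_d)| ≤ ∏_{ω ∈ {0,1}^d} ‖φ_ω‖_{U^d(G)}. -/
open Finset Function
set_option linter.unusedSectionVars false
namespace GCS
variable {G : Type} [AddCommGroup G] [Fintype G] {d : ℕ}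

noncomputable def S (d : ℕ) {G : Type} [AddCommGroup G] [Fintype G]
    (f : (Fin d → Bool) → G → ℂ) : ℂ :=
  ∑ x : G, ∑ h : Fin d → G, ∏ ω : Fin d → Bool,
    (starRingEnd ℂ)^[∑ i, if ω i then 1 else 0] (f ω (x + ∑ i, if ω i then h i else 0))

lemma conj_it_two (n : ℕ) (z : ℂ) : (starRingEnd ℂ)^[n + 2] z = (starRingEnd ℂ)^[n] z := by
  rw [Function.iterate_add_apply]
  simp

lemma conj_it_self (n : ℕ) (z : ℂ) :
    (starRingEnd ℂ)^[n] ((starRingEnd ℂ)^[n] z) = z := by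
  rw [← Function.iterate_add_apply]
  induction n with
  | zero => simp
  | succ k ih =>
      have h2 : k + 1 + (k + 1) = k + k + 2 := by ring
      rw [h2, conj_it_two]
      exact ih

lemma conj_sum_prod {β γ : Type*} [Fintype β] [Fintype γ] (u : γ → ℕ) (g : γ → β → ℂ) :
    ∑ y : β, ∏ ν : γ, (starRingEnd ℂ)^[u ν + 1] (g ν y)
      = (starRingEnd ℂ) (∑ y : β, ∏ ν : γ, (starRingEnd ℂ)^[u ν] (g ν y)) := by
  rw [map_sum]
  refine Finset.sum_congr rfl fun y _ => ?_
  rw [map_prod]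
  exact Finset.prod_congr rfl fun ν _ => by rw [Function.iterate_succ_apply']

lemma symm_at (i : Fin d) {β : Type*} (p : β × ({j : Fin d // j ≠ i} → β)) :
    (Equiv.funSplitAt i β).symm p i = p.1 := by
  simp [Equiv.funSplitAt, Equiv.piSplitAt]

lemma symm_ne (i : Fin d) {β : Type*} (p : β × ({j : Fin d // j ≠ i} → β))
    {j : Fin d} (h : j ≠ i) : (Equiv.funSplitAt i β).symm p j = p.2 ⟨j, h⟩ := by
  simp [Equiv.funSplitAt, Equiv.piSplitAt, h]

lemma upd_symm (i : Fin d) (ν : {j : Fin d // j ≠ i} → Bool) (b c : Bool) :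
    Function.update ((Equiv.funSplitAt i Bool).symm (b, ν)) i c
      = (Equiv.funSplitAt i Bool).symm (c, ν) := by
  funext j
  rcases eq_or_ne j i with rfl | hj
  · rw [update_self, symm_at]
  · rw [update_of_ne hj, symm_ne i _ hj, symm_ne i _ hj]

lemma sum_split {M : Type*} [AddCommMonoid M] (i : Fin d) (g : Fin d → M) :
    ∑ j, g j = g i + ∑ j : {j : Fin d // j ≠ i}, g j := by
  rw [← Finset.sum_erase_add _ _ (mem_univ i), add_comm]
  congr 1
  rw [← Finset.sum_subtype (univ.erase i) (fun x => by simp [Finset.mem_erase]) g]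

def w' (i : Fin d) (ν : {j : Fin d // j ≠ i} → Bool) : ℕ := ∑ j, if ν j then 1 else 0

def σ' {G : Type} [AddCommGroup G] [Fintype G] (i : Fin d)
    (ν : {j : Fin d // j ≠ i} → Bool) (h' : {j : Fin d // j ≠ i} → G) : G :=
  ∑ j, if ν j then h' j else 0

lemma prod_step {M : Type*} [CommMonoid M] (i : Fin d) (F : (Fin d → Bool) → M) : ∏ ω, F ω =
    (∏ ν, F ((Equiv.funSplitAt i Bool).symm (false, ν)))
      * (∏ ν, F ((Equiv.funSplitAt i Bool).symm (true, ν))) := by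
  rw [← Equiv.prod_comp (Equiv.funSplitAt i Bool).symm F, Fintype.prod_prod_type,
    Fintype.prod_bool, mul_comm]

lemma sum_step (i : Fin d) (F : (Fin d → G) → ℂ) : ∑ h, F h =
    ∑ t : G, ∑ h' : ({j : Fin d // j ≠ i} → G), F ((Equiv.funSplitAt i G).symm (t, h')) := by
  rw [← Equiv.sum_comp (Equiv.funSplitAt i G).symm F, Fintype.sum_prod_type]

lemma hw (i : Fin d) (b : Bool) (ν : {j : Fin d // j ≠ i} → Bool) :
    (∑ j, if (Equiv.funSplitAt i Bool).symm (b, ν) j then 1 else 0)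
      = w' i ν + (if b then 1 else 0) := by
  rw [sum_split i, add_comm]
  congr 1
  · exact Finset.sum_congr rfl fun j _ => by rw [symm_ne i _ j.2]
  · rw [symm_at]

lemma hσ (i : Fin d) (b : Bool) (ν : {j : Fin d // j ≠ i} → Bool) (t : G)
    (h' : {j : Fin d // j ≠ i} → G) :
    (∑ j, if (Equiv.funSplitAt i Bool).symm (b, ν) j then
        (Equiv.funSplitAt i G).symm (t, h') j else 0)
      = (if b then t else 0) + σ' i ν h' := by
  rw [sum_split i]
  congr 1
  · rw [symm_at, symm_at]
  · exact Finset.sum_congr rfl fun j _ => by rw [symm_ne i _ j.2, symm_ne i _ j.2]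

lemma pair_sum {G β : Type*} [AddCommGroup G] [Fintype G] [Fintype β]
    (P Q : G → β → ℂ) :
    ∑ x : G, ∑ t : G, ∑ h' : β, P x h' * Q (x + t) h'
      = ∑ h' : β, (∑ y : G, P y h') * (∑ y : G, Q y h') := by
  have step1 : ∀ x : G, ∑ t : G, ∑ h' : β, P x h' * Q (x + t) h'
      = ∑ h' : β, P x h' * ∑ y : G, Q y h' := by
    intro x
    rw [Finset.sum_comm]
    refine Finset.sum_congr rfl fun h' _ => ?_
    rw [← Finset.mul_sum]
    congr 1
    exact Equiv.sum_comp (Equiv.addLeft x) (fun y => Q y h')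
  calc ∑ x : G, ∑ t : G, ∑ h' : β, P x h' * Q (x + t) h'
      = ∑ x : G, ∑ h' : β, P x h' * ∑ y : G, Q y h' :=
        Finset.sum_congr rfl fun x _ => step1 x
    _ = ∑ h' : β, ∑ x : G, P x h' * ∑ y : G, Q y h' := Finset.sum_comm
    _ = ∑ h' : β, (∑ y : G, P y h') * (∑ y : G, Q y h') :=
        Finset.sum_congr rfl fun h' _ => by rw [Finset.sum_mul]

noncomputable def Af (i : Fin d) (f : (Fin d → Bool) → G → ℂ)
    (h' : {j : Fin d // j ≠ i} → G) : ℂ :=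
  ∑ y : G, ∏ ν, (starRingEnd ℂ)^[w' i ν]
    (f ((Equiv.funSplitAt i Bool).symm (false, ν)) (y + σ' i ν h'))

noncomputable def Bf (i : Fin d) (f : (Fin d → Bool) → G → ℂ)
    (h' : {j : Fin d // j ≠ i} → G) : ℂ :=
  ∑ y : G, ∏ ν, (starRingEnd ℂ)^[w' i ν + 1]
    (f ((Equiv.funSplitAt i Bool).symm (true, ν)) (y + σ' i ν h'))

lemma S_eq (f : (Fin d → Bool) → G → ℂ) (i : Fin d) :
    S d f = ∑ h' : ({j : Fin d // j ≠ i} → G), Af i f h' * Bf i f h' := by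
  have main : ∀ (x t : G) (h' : {j : Fin d // j ≠ i} → G),
      (∏ ω : Fin d → Bool, (starRingEnd ℂ)^[∑ j, if ω j then 1 else 0]
        (f ω (x + ∑ j, if ω j then (Equiv.funSplitAt i G).symm (t, h') j else 0)))
      = (∏ ν, (starRingEnd ℂ)^[w' i ν]
            (f ((Equiv.funSplitAt i Bool).symm (false, ν)) (x + σ' i ν h')))
        * (∏ ν, (starRingEnd ℂ)^[w' i ν + 1]
            (f ((Equiv.funSplitAt i Bool).symm (true, ν)) ((x + t) + σ' i ν h'))) := by
    intro x t h'
    rw [prod_step i]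
    congr 1
    · refine Finset.prod_congr rfl fun ν _ => ?_
      rw [hw, hσ]
      norm_num
    · refine Finset.prod_congr rfl fun ν _ => ?_
      rw [hw, hσ]
      simp only [if_true, add_assoc]
  unfold S Af Bf
  calc (∑ x : G, ∑ h : Fin d → G, ∏ ω : Fin d → Bool,
      (starRingEnd ℂ)^[∑ j, if ω j then 1 else 0] (f ω (x + ∑ j, if ω j then h j else 0)))
      = ∑ x : G, ∑ t : G, ∑ h' : ({j : Fin d // j ≠ i} → G),
          (∏ ν, (starRingEnd ℂ)^[w' i ν]
            (f ((Equiv.funSplitAt i Bool).symm (false, ν)) (x + σ' i ν h')))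
          * (∏ ν, (starRingEnd ℂ)^[w' i ν + 1]
            (f ((Equiv.funSplitAt i Bool).symm (true, ν)) ((x + t) + σ' i ν h'))) := by
        refine Finset.sum_congr rfl fun x _ => ?_
        rw [sum_step i]
        exact Finset.sum_congr rfl fun t _ => Finset.sum_congr rfl fun h' _ => main x t h'
    _ = _ := pair_sum
          (fun y h' => ∏ ν, (starRingEnd ℂ)^[w' i ν]
            (f ((Equiv.funSplitAt i Bool).symm (false, ν)) (y + σ' i ν h')))
          (fun y h' => ∏ ν, (starRingEnd ℂ)^[w' i ν + 1]
            (f ((Equiv.funSplitAt i Bool).symm (true, ν)) (y + σ' i ν h')))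

lemma S_false (f : (Fin d → Bool) → G → ℂ) (i : Fin d) :
    S d (fun ω => f (Function.update ω i false))
      = ∑ h' : ({j : Fin d // j ≠ i} → G), (Complex.normSq (Af i f h') : ℂ) := by
  rw [S_eq (fun ω => f (Function.update ω i false)) i]
  refine Finset.sum_congr rfl fun h' _ => ?_
  have e1 : Af i (fun ω => f (Function.update ω i false)) h' = Af i f h' := by
    unfold Af
    refine Finset.sum_congr rfl fun y _ => Finset.prod_congr rfl fun ν _ => ?_
    beta_reduce
    rw [upd_symm]
  have e2 : Bf i (fun ω => f (Function.update ω i false)) h'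
      = (starRingEnd ℂ) (Af i f h') := by
    unfold Af Bf
    rw [← conj_sum_prod (fun ν => w' i ν)
      (fun ν y => f ((Equiv.funSplitAt i Bool).symm (false, ν)) (y + σ' i ν h'))]
    refine Finset.sum_congr rfl fun y _ => Finset.prod_congr rfl fun ν _ => ?_
    beta_reduce
    rw [upd_symm]
  rw [e1, e2, Complex.mul_conj]

lemma S_true (f : (Fin d → Bool) → G → ℂ) (i : Fin d) :
    S d (fun ω => f (Function.update ω i true))
      = ∑ h' : ({j : Fin d // j ≠ i} → G), (Complex.normSq (Bf i f h') : ℂ) := by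
  rw [S_eq (fun ω => f (Function.update ω i true)) i]
  refine Finset.sum_congr rfl fun h' _ => ?_
  have e2 : Bf i (fun ω => f (Function.update ω i true)) h' = Bf i f h' := by
    unfold Bf
    refine Finset.sum_congr rfl fun y _ => Finset.prod_congr rfl fun ν _ => ?_
    beta_reduce
    rw [upd_symm]
  have e1 : Af i (fun ω => f (Function.update ω i true)) h'
      = (starRingEnd ℂ) (Bf i f h') := by
    unfold Af Bf
    rw [← conj_sum_prod (fun ν => w' i ν + 1)
      (fun ν y => f ((Equiv.funSplitAt i Bool).symm (true, ν)) (y + σ' i ν h'))]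
    refine Finset.sum_congr rfl fun y _ => Finset.prod_congr rfl fun ν _ => ?_
    beta_reduce
    rw [upd_symm]
    exact (conj_it_two (w' i ν) _).symm
  rw [e1, e2, mul_comm, Complex.mul_conj]

lemma key (f : (Fin d → Bool) → G → ℂ) (i : Fin d) :
    ‖S d f‖ ^ 2 ≤
      ‖S d (fun ω => f (Function.update ω i false))‖
        * ‖S d (fun ω => f (Function.update ω i true))‖ := by
  rw [S_eq f i, S_false f i, S_true f i]
  have habs : ∀ (r : ({j : Fin d // j ≠ i} → G) → ℝ), (∀ h', 0 ≤ r h') →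
      ‖∑ h', (r h' : ℂ)‖ = ∑ h', r h' := by
    intro r hr
    rw [← Complex.ofReal_sum, Complex.norm_real, Real.norm_eq_abs,
      abs_of_nonneg (Finset.sum_nonneg fun h' _ => hr h')]
  rw [habs _ (fun h' => Complex.normSq_nonneg _), habs _ (fun h' => Complex.normSq_nonneg _)]
  calc ‖∑ h', Af i f h' * Bf i f h'‖ ^ 2
      ≤ (∑ h', ‖Af i f h' * Bf i f h'‖) ^ 2 := by
        refine pow_le_pow_left₀ (norm_nonneg _) (norm_sum_le _ _) 2
    _ = (∑ h', ‖Af i f h'‖ * ‖Bf i f h'‖) ^ 2 := by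
        simp [map_mul]
    _ ≤ (∑ h', ‖Af i f h'‖ ^ 2) * (∑ h', ‖Bf i f h'‖ ^ 2) :=
        Finset.sum_mul_sq_le_sq_mul_sq univ _ _
    _ = (∑ h', Complex.normSq (Af i f h')) * (∑ h', Complex.normSq (Bf i f h')) := by
        simp [Complex.sq_norm]

lemma iter (f : (Fin d → Bool) → G → ℂ) (s : Finset (Fin d)) :
    ‖S d f‖ ^ (2 ^ d) ≤
      ∏ η : Fin d → Bool,
        ‖S d (fun ω : Fin d → Bool => f (fun j => if j ∈ s then η j else ω j))‖ := by
  induction s using Finset.induction_on with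
  | empty =>
      simp only [Finset.notMem_empty, if_false]
      have he : (fun ω : Fin d → Bool => f (fun j => ω j)) = f := rfl
      rw [he, Finset.prod_const, Finset.card_univ, Fintype.card_fun, Fintype.card_bool,
        Fintype.card_fin]
  | @insert i s his ih =>
      have hsame : ∀ ν : {j : Fin d // j ≠ i} → Bool,
          (fun ω : Fin d → Bool => f (fun j => if j ∈ s then (Equiv.funSplitAt i Bool).symm (true, ν) j
              else ω j))
          = (fun ω : Fin d → Bool => f (fun j => if j ∈ s then (Equiv.funSplitAt i Bool).symm (false, ν) j
              else ω j)) := by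
        intro ν
        funext ω
        refine congrArg f (funext fun j => ?_)
        by_cases hj : j ∈ s
        · have hji : j ≠ i := fun h => his (h ▸ hj)
          rw [if_pos hj, if_pos hj, symm_ne i _ hji, symm_ne i _ hji]
        · rw [if_neg hj, if_neg hj]
      have hupd : ∀ (ν : {j : Fin d // j ≠ i} → Bool) (b : Bool),
          (fun ω : Fin d → Bool => (fun ω' : Fin d → Bool => f (fun j => if j ∈ s then
              (Equiv.funSplitAt i Bool).symm (false, ν) j else ω' j))
            (Function.update ω i b))
          = (fun ω : Fin d → Bool => f (fun j => if j ∈ insert i s then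
              (Equiv.funSplitAt i Bool).symm (b, ν) j else ω j)) := by
        intro ν b
        funext ω
        refine congrArg f (funext fun j => ?_)
        rcases eq_or_ne j i with rfl | hji
        · rw [if_neg his, Function.update_self, if_pos (Finset.mem_insert_self j s), symm_at]
        · rw [Function.update_of_ne hji, symm_ne i _ hji]
          by_cases hj : j ∈ s
          · rw [if_pos hj, if_pos (Finset.mem_insert_of_mem hj), symm_ne i _ hji]
          · rw [if_neg hj, if_neg (by simp [hji, hj])]
      calc ‖S d f‖ ^ (2 ^ d)
          ≤ ∏ η : Fin d → Bool,
              ‖S d (fun ω : Fin d → Bool => f (fun j => if j ∈ s then η j else ω j))‖ := ih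
        _ = ∏ ν : {j : Fin d // j ≠ i} → Bool,
              ‖S d (fun ω : Fin d → Bool => f (fun j => if j ∈ s then
                (Equiv.funSplitAt i Bool).symm (false, ν) j else ω j))‖ ^ 2 := by
            rw [prod_step i (fun η =>
              ‖S d (fun ω : Fin d → Bool => f (fun j => if j ∈ s then η j else ω j))‖)]
            rw [← Finset.prod_mul_distrib]
            refine Finset.prod_congr rfl fun ν _ => ?_
            rw [hsame ν, sq]
        _ ≤ ∏ ν : {j : Fin d // j ≠ i} → Bool,
              (‖S d (fun ω : Fin d → Bool => f (fun j => if j ∈ insert i s then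
                  (Equiv.funSplitAt i Bool).symm (false, ν) j else ω j))‖
              * ‖S d (fun ω : Fin d → Bool => f (fun j => if j ∈ insert i s then
                  (Equiv.funSplitAt i Bool).symm (true, ν) j else ω j))‖) := by
            refine Finset.prod_le_prod (fun ν _ => sq_nonneg _) fun ν _ => ?_
            have := key (fun ω : Fin d → Bool => f (fun j => if j ∈ s then
              (Equiv.funSplitAt i Bool).symm (false, ν) j else ω j)) i
            rwa [hupd ν false, hupd ν true] at this
        _ = ∏ η : Fin d → Bool,
              ‖S d (fun ω : Fin d → Bool => f (fun j => if j ∈ insert i s then η j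
                else ω j))‖ := by
            rw [prod_step i (fun η =>
              ‖S d (fun ω : Fin d → Bool => f (fun j => if j ∈ insert i s then η j else ω j))‖),
              ← Finset.prod_mul_distrib]

lemma S_conj (ψ : G → ℂ) :
    S d (fun _ => fun y => (starRingEnd ℂ) (ψ y)) = (starRingEnd ℂ) (S d (fun _ => ψ)) := by
  unfold S
  rw [map_sum]
  refine Finset.sum_congr rfl fun x _ => ?_
  rw [map_sum]
  refine Finset.sum_congr rfl fun h _ => ?_
  rw [map_prod]
  refine Finset.prod_congr rfl fun ω _ => ?_
  beta_reduce
  rw [← Function.iterate_succ_apply, Function.iterate_succ_apply']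

lemma abs_S_conj_iter (n : ℕ) (ψ : G → ℂ) :
    ‖S d (fun _ => fun y => (starRingEnd ℂ)^[n] (ψ y))‖
      = ‖S d (fun _ => ψ)‖ := by
  induction n generalizing ψ with
  | zero => rfl
  | succ k ih =>
      have h1 : (fun (_ : Fin d → Bool) => fun y => (starRingEnd ℂ)^[k + 1] (ψ y))
          = (fun (_ : Fin d → Bool) => fun y =>
              (starRingEnd ℂ)^[k] ((fun t => (starRingEnd ℂ) (ψ t)) y)) := by
        funext ω y
        rw [Function.iterate_succ_apply]
      rw [h1, ih (fun t => (starRingEnd ℂ) (ψ t)), S_conj, Complex.norm_conj]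

end GCS

/-- The average of a complex-valued function over a finite type. -/
noncomputable def avgC {X : Type*} [Fintype X] (φ : X → ℂ) : ℂ :=
  (∑ x, φ x) / (Fintype.card X : ℂ)

/-- The Gowers `U^d` norm of `φ : G → ℂ` on a finite abelian group `G`:
`‖φ‖_{U^d(G)} = (E_{x,h_1,…,h_d} ∏_{ω ∈ {0,1}^d} C^{|ω|} φ(x + ω·h))^{1/2^d}`,
where `C` is complex conjugation and `|ω| = ω_1 + ⋯ + ω_d`. -/
noncomputable def gowersNorm {G : Type*} [AddCommGroup G] [Fintype G]
    (d : ℕ) (φ : G → ℂ) : ℝ :=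
  ‖
    ((∑ x : G, ∑ h : Fin d → G, ∏ ω : Fin d → Bool,
        (fun z : ℂ => (starRingEnd ℂ) z)^[∑ i, if ω i then 1 else 0]
          (φ (x + ∑ i, if ω i then h i else 0)))
      / ((Fintype.card G : ℂ) ^ (d + 1)))‖ ^ ((1 : ℝ) / 2 ^ d)

/-- **Gowers–Cauchy–Schwarz inequality.** For a finite abelian group `G`, `d ≥ 1` and
functions `φ_ω : G → ℂ` indexed by `ω ∈ {0,1}^d`,
`|E_{x,h_1,…,h_d} ∏_ω φ_ω(x + ω·h)| ≤ ∏_ω ‖φ_ω‖_{U^d(G)}`. -/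
theorem gowers_cauchy_schwarz {G : Type} [AddCommGroup G] [Fintype G]
    (d : ℕ) (hd : 1 ≤ d) (φ : (Fin d → Bool) → G → ℂ) :
    ‖((∑ x : G, ∑ h : Fin d → G, ∏ ω : Fin d → Bool,
        φ ω (x + ∑ i, if ω i then h i else 0)) / ((Fintype.card G : ℂ) ^ (d + 1)))‖ ≤
      ∏ ω : Fin d → Bool, gowersNorm d (φ ω) := by
  classical
  haveI : Nonempty G := ⟨0⟩
  have hnum : (∑ x : G, ∑ h : Fin d → G, ∏ ω : Fin d → Bool,
      φ ω (x + ∑ i, if ω i then h i else 0))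
      = GCS.S d (fun ω y => (starRingEnd ℂ)^[∑ i, if ω i then 1 else 0] (φ ω y)) := by
    unfold GCS.S
    refine Finset.sum_congr rfl fun x _ => Finset.sum_congr rfl fun h _ =>
      Finset.prod_congr rfl fun ω _ => ?_
    beta_reduce
    exact (GCS.conj_it_self _ _).symm
  rw [hnum]
  set f : (Fin d → Bool) → G → ℂ :=
    fun ω y => (starRingEnd ℂ)^[∑ i, if ω i then 1 else 0] (φ ω y) with hf
  set N : ℝ := (Fintype.card G : ℝ) ^ (d + 1) with hNdef
  have hNpos : 0 < N := by
    have hc : 0 < Fintype.card G := Fintype.card_pos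
    rw [hNdef]
    positivity
  have habsN : ‖(Fintype.card G : ℂ) ^ (d + 1)‖ = N := by
    rw [norm_pow, Complex.norm_natCast]
  have hg : ∀ ω : Fin d → Bool, gowersNorm d (φ ω)
      = (‖GCS.S d (fun _ => φ ω)‖ / N) ^ ((1 : ℝ) / 2 ^ d) := by
    intro ω
    unfold gowersNorm
    rw [norm_div, habsN]
    rfl
  rw [norm_div, habsN]
  have hiter := GCS.iter f Finset.univ
  simp only [Finset.mem_univ, if_true] at hiter
  have hiter2 : ‖GCS.S d f‖ ^ (2 ^ d) ≤
      ∏ η : Fin d → Bool, ‖GCS.S d (fun _ => φ η)‖ := by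
    refine hiter.trans_eq (Finset.prod_congr rfl fun η _ => ?_)
    exact GCS.abs_S_conj_iter _ (φ η)
  have hZ : (0:ℝ) ≤ ‖GCS.S d f‖ / N :=
    div_nonneg (norm_nonneg _) hNpos.le
  have hstep : (‖GCS.S d f‖ / N) ^ (2 ^ d) ≤
      ∏ η : Fin d → Bool, (‖GCS.S d (fun _ => φ η)‖ / N) := by
    rw [div_pow, Finset.prod_div_distrib, Finset.prod_const, Finset.card_univ,
      Fintype.card_fun, Fintype.card_bool, Fintype.card_fin]
    exact (div_le_div_iff_of_pos_right (pow_pos hNpos _)).mpr hiter2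
  have hcast : (((2:ℕ) ^ d : ℕ) : ℝ) = (2:ℝ) ^ d := by push_cast; ring
  calc ‖GCS.S d f‖ / N
      = ((‖GCS.S d f‖ / N) ^ (2 ^ d : ℕ)) ^ ((1:ℝ) / 2 ^ d) := by
        rw [← Real.rpow_natCast (‖GCS.S d f‖ / N) (2 ^ d), ← Real.rpow_mul hZ,
          hcast, mul_one_div, div_self (by positivity : ((2:ℝ) ^ d) ≠ 0), Real.rpow_one]
    _ ≤ (∏ η : Fin d → Bool, (‖GCS.S d (fun _ => φ η)‖ / N)) ^ ((1:ℝ) / 2 ^ d) :=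
        Real.rpow_le_rpow (pow_nonneg hZ _) hstep (by positivity)
    _ = ∏ η : Fin d → Bool, (‖GCS.S d (fun _ => φ η)‖ / N) ^ ((1:ℝ) / 2 ^ d) :=
        (Real.finset_prod_rpow Finset.univ _
          (fun η _ => div_nonneg (norm_nonneg _) hNpos.le) _).symm
    _ = ∏ ω : Fin d → Bool, gowersNorm d (φ ω) :=
        Finset.prod_congr rfl fun ω _ => (hg ω).symm
end

section
/- Let ‖·‖ be a quasi-algebra predual norm on ℝ^G with respect to a convex compact set F, with associated operator D and function C. If ψ ∈ ℝ^G satisfies ‖ψ‖_{BAC}^* ≤ 1, then for every m ≥ 1 the pointwise m-th power ψ^m satisfies ‖ψ^m‖^* ≤ C(m). -/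
open Finset

/-- The inner product `⟨f, g⟩ = E_{x ∈ G} f(x) g(x)` on real functions on a finite set. -/
noncomputable def inn {G : Type*} [Fintype G] (f g : G → ℝ) : ℝ :=
  (∑ x, f x * g x) / (Fintype.card G : ℝ)

/-- The dual norm of a norm-like functional `nn`:
`‖f‖^* = sup { |⟨f, g⟩| : nn g ≤ 1 }`. -/
noncomputable def dualNormOf {G : Type*} [Fintype G]
    (nn : (G → ℝ) → ℝ) (f : G → ℝ) : ℝ :=
  sSup {r : ℝ | ∃ g : G → ℝ, nn g ≤ 1 ∧ r = |inn f g|}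

/-- `nn` is a norm on the space `ℝ^G` of real functions on `G`. -/
def IsNormOn (G : Type*) [Fintype G] (nn : (G → ℝ) → ℝ) : Prop :=
  (∀ f, 0 ≤ nn f) ∧ (∀ f, nn f = 0 ↔ f = 0) ∧
  (∀ (a : ℝ) (f), nn (a • f) = |a| * nn f) ∧
  (∀ f g, nn (f + g) ≤ nn f + nn g)

/-- A norm `nn` on `ℝ^G` is a quasi-algebra predual norm with respect to a convex
compact set `F`, with functions `c : ℝ⁺ → ℝ⁺`, `C : ℤ⁺ → ℝ⁺` and operator `D`, if:
(1) `⟨f, Df⟩ ≤ 1` for `f ∈ F`; (2) `⟨f, Df⟩ ≥ c(ε)` for `f ∈ F` with `nn f ≥ ε`;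
(3) `‖Df_1 ⋯ Df_m‖^* ≤ C(m)` for `f_1, …, f_m ∈ F`; (4) `{Df : f ∈ F}` is compact and
spans `ℝ^G`. -/
structure IsQuasiAlgebraPredual (G : Type*) [Fintype G]
    (nn : (G → ℝ) → ℝ) (F : Set (G → ℝ)) (c : ℝ → ℝ) (C : ℕ → ℝ)
    (D : (G → ℝ) → (G → ℝ)) : Prop where
  isNorm : IsNormOn G nn
  convexF : Convex ℝ F
  compactF : IsCompact F
  inner_le_one : ∀ f ∈ F, inn f (D f) ≤ 1
  inner_ge : ∀ ε : ℝ, 0 < ε → ∀ f ∈ F, ε ≤ nn f → c ε ≤ inn f (D f)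
  dual_prod_le : ∀ m : ℕ, 1 ≤ m → ∀ fs : Fin m → (G → ℝ), (∀ i, fs i ∈ F) →
    dualNormOf nn (fun x => ∏ i, D (fs i) x) ≤ C m
  compactD : IsCompact (D '' F)
  spanD : Submodule.span ℝ (D '' F) = ⊤

/-- The basic anti-uniform correlation (BAC) norm:
`‖g‖_{BAC} = max { |⟨g, Df⟩| : f ∈ F }`. -/
noncomputable def bacNorm {G : Type*} [Fintype G]
    (F : Set (G → ℝ)) (D : (G → ℝ) → (G → ℝ)) (g : G → ℝ) : ℝ :=
  sSup {r : ℝ | ∃ f ∈ F, r = |inn g (D f)|}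

/-- The dual of the BAC norm. -/
noncomputable def bacDualNorm {G : Type*} [Fintype G]
    (F : Set (G → ℝ)) (D : (G → ℝ) → (G → ℝ)) (f : G → ℝ) : ℝ :=
  sSup {r : ℝ | ∃ g : G → ℝ, bacNorm F D g ≤ 1 ∧ r = |inn f g|}

section helpers
set_option linter.unusedSectionVars false
variable {G : Type*} [Fintype G] [Nonempty G]

lemma inn_comm (f g : G → ℝ) : inn f g = inn g f := by
  simp [inn, mul_comm]

lemma inn_smul_left (a : ℝ) (f g : G → ℝ) : inn (a • f) g = a * inn f g := by
  unfold inn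
  rw [show (∑ x : G, (a • f) x * g x) = ∑ x : G, a * (f x * g x) from
    Finset.sum_congr rfl fun x _ => by simp [mul_assoc], ← Finset.mul_sum, mul_div_assoc]

lemma inn_smul_right (a : ℝ) (f g : G → ℝ) : inn f (a • g) = a * inn f g := by
  rw [inn_comm, inn_smul_left, inn_comm]

lemma inn_add_right (f g h : G → ℝ) : inn f (g + h) = inn f g + inn f h := by
  simp [inn, mul_add, Finset.sum_add_distrib, add_div]

lemma inn_add_left (f g h : G → ℝ) : inn (f + g) h = inn f h + inn g h := by
  rw [inn_comm, inn_add_right, inn_comm f h, inn_comm g h]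

lemma inn_zero_right (f : G → ℝ) : inn f 0 = 0 := by simp [inn]

lemma inn_neg_right (f g : G → ℝ) : inn f (-g) = - inn f g := by
  simp only [inn, Pi.neg_apply, mul_neg]
  rw [Finset.sum_neg_distrib, neg_div]

lemma inn_sum_left {ι : Type*} (s : Finset ι) (f : ι → (G → ℝ)) (g : G → ℝ) :
    inn (∑ i ∈ s, f i) g = ∑ i ∈ s, inn (f i) g := by
  simp [inn, Finset.sum_apply, Finset.sum_mul, Finset.sum_div]
  rw [Finset.sum_comm]

lemma inn_self_eq_zero {f : G → ℝ} (h : inn f f = 0) : f = 0 := by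
  have hc : (0:ℝ) < (Fintype.card G : ℝ) := by positivity
  have hz : ∑ x, f x * f x = 0 := by
    have := h
    unfold inn at this
    field_simp at this
    simpa only [sq, mul_zero] using this
  have hx : ∀ x ∈ Finset.univ, f x * f x = 0 := by
    intro x hx
    exact (Finset.sum_eq_zero_iff_of_nonneg (fun x _ => mul_self_nonneg (f x))).mp hz x hx
  funext x
  exact mul_self_eq_zero.mp (hx x (Finset.mem_univ x))

lemma abs_inn_le (f g : G → ℝ) : |inn f g| ≤ ‖f‖ * ‖g‖ := by
  have hc : (0:ℝ) < (Fintype.card G : ℝ) := by positivity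
  have h1 : |∑ x, f x * g x| ≤ ∑ x : G, ‖f‖ * ‖g‖ := by
    refine (Finset.abs_sum_le_sum_abs _ _).trans (Finset.sum_le_sum fun x _ => ?_)
    rw [abs_mul]
    exact mul_le_mul (norm_le_pi_norm f x |>.trans_eq' (Real.norm_eq_abs _).symm)
      (norm_le_pi_norm g x |>.trans_eq' (Real.norm_eq_abs _).symm) (abs_nonneg _)
      (norm_nonneg f)
  rw [inn, abs_div, abs_of_pos hc, div_le_iff₀ hc]
  simpa [Finset.sum_const, nsmul_eq_mul, mul_comm] using h1

/-- Every function decomposes over single bumps. -/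
lemma sum_smul_single (g : G → ℝ) [DecidableEq G] :
    (∑ x : G, (g x) • (Pi.single x (1:ℝ) : G → ℝ)) = g := by
  rw [show (fun x : G => (g x) • (Pi.single x (1:ℝ) : G → ℝ)) = fun x => Pi.single x (g x) from
    funext fun x => funext fun y => by by_cases h : x = y <;> simp [Pi.single_apply, h]]
  exact Finset.univ_sum_single g

/-- Norm-like functions on a finite-dimensional space are coercive. -/
lemma norm_coercive (nn : (G → ℝ) → ℝ)
    (h0 : ∀ g, nn g = 0 → g = 0)
    (hs : ∀ (a : ℝ) (g), nn (a • g) = |a| * nn g)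
    (ht : ∀ f g, nn (f + g) ≤ nn f + nn g) :
    ∃ ε > 0, ∀ g : G → ℝ, ε * ‖g‖ ≤ nn g := by
  classical
  have hzero : nn 0 = 0 := by
    have := hs 0 0; simpa using this
  have hnonneg : ∀ g, 0 ≤ nn g := by
    intro g
    have h1 : nn (g + (-g)) ≤ nn g + nn (-g) := ht g (-g)
    have h2 : nn (-g) = nn g := by
      have := hs (-1) g; simpa using this
    rw [add_neg_cancel, hzero, h2] at h1
    linarith
  have hsum : ∀ (s : Finset G) (f : G → (G → ℝ)),
      nn (∑ x ∈ s, f x) ≤ ∑ x ∈ s, nn (f x) := by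
    intro s f
    induction s using Finset.induction with
    | empty => simp [hzero]
    | insert _ _ hns ih =>
      rw [Finset.sum_insert hns, Finset.sum_insert hns]
      exact (ht _ _).trans (by linarith)
  set L : ℝ := ∑ x : G, nn (Pi.single x (1:ℝ)) with hL
  have hbound : ∀ g : G → ℝ, nn g ≤ L * ‖g‖ := by
    intro g
    calc nn g = nn (∑ x : G, (g x) • (Pi.single x (1:ℝ) : G → ℝ)) := by rw [sum_smul_single]
    _ ≤ ∑ x : G, nn ((g x) • (Pi.single x (1:ℝ) : G → ℝ)) := hsum _ _
    _ ≤ ∑ x : G, ‖g‖ * nn (Pi.single x (1:ℝ)) := by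
        refine Finset.sum_le_sum fun x _ => ?_
        rw [hs]
        exact mul_le_mul_of_nonneg_right ((Real.norm_eq_abs _ ▸ norm_le_pi_norm g x)) (hnonneg _)
    _ = L * ‖g‖ := by rw [hL, Finset.sum_mul]; exact Finset.sum_congr rfl fun x _ => mul_comm _ _
  have hlip : ∀ a b : G → ℝ, |nn a - nn b| ≤ L * ‖a - b‖ := by
    intro a b
    have h1 : nn a ≤ nn b + nn (a - b) := by
      have := ht b (a - b); simpa using this
    have h2 : nn b ≤ nn a + nn (b - a) := by
      have := ht a (b - a); simpa using this
    have h3 : nn (a - b) ≤ L * ‖a - b‖ := hbound _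
    have h4 : nn (b - a) ≤ L * ‖a - b‖ := by
      have heq : (b - a) = (-1 : ℝ) • (a - b) := by ext y; simp
      rw [heq, hs]; simpa using h3
    rw [abs_sub_le_iff]
    constructor <;> linarith
  have hcont : Continuous nn := by
    rcases le_or_gt L 0 with hL0 | hL0
    · have : ∀ g, nn g = 0 := fun g =>
        le_antisymm ((hbound g).trans (by nlinarith [norm_nonneg g])) (hnonneg g)
      simpa [funext this] using continuous_const
    · refine (LipschitzWith.of_dist_le_mul (K := ⟨L, hL0.le⟩) fun a b => ?_).continuous
      rw [Real.dist_eq, dist_eq_norm]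
      exact hlip a b
  obtain ⟨g₀, hg₀mem, hg₀min⟩ := (isCompact_sphere (0 : G → ℝ) 1).exists_isMinOn
    (NormedSpace.sphere_nonempty.mpr zero_le_one) hcont.continuousOn
  have hg₀norm : ‖g₀‖ = 1 := by simpa using hg₀mem
  have hε : 0 < nn g₀ := by
    rcases (hnonneg g₀).lt_or_eq with h | h
    · exact h
    · exfalso
      have := h0 g₀ h.symm
      rw [this] at hg₀norm; simp at hg₀norm
  refine ⟨nn g₀, hε, fun g => ?_⟩
  rcases eq_or_ne g 0 with rfl | hg
  · simp [hzero]
  · have hng : (0:ℝ) < ‖g‖ := norm_pos_iff.mpr hg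
    have hu : ‖(‖g‖⁻¹ • g)‖ = 1 := by
      rw [norm_smul]; simp [abs_of_pos (inv_pos.mpr hng), inv_mul_cancel₀ hng.ne']
    have humem : (‖g‖⁻¹ • g) ∈ Metric.sphere (0 : G → ℝ) 1 := by
      simpa using hu
    have hmin := hg₀min humem
    have heq : nn g = ‖g‖ * nn (‖g‖⁻¹ • g) := by
      rw [show g = ‖g‖ • (‖g‖⁻¹ • g) by rw [smul_smul, mul_inv_cancel₀ hng.ne', one_smul], hs,
        abs_of_pos hng]
      rw [smul_smul, mul_inv_cancel₀ hng.ne', one_smul]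
    rw [heq]
    have hmin' : nn g₀ ≤ nn (‖g‖⁻¹ • g) := hmin
    nlinarith

/-- If `inn g` vanishes on a spanning set then `g = 0`. -/
lemma eq_zero_of_inn_vanish {s : Set (G → ℝ)} (hs : Submodule.span ℝ s = ⊤)
    {g : G → ℝ} (hg : ∀ v ∈ s, inn g v = 0) : g = 0 := by
  let φ : (G → ℝ) →ₗ[ℝ] ℝ :=
    { toFun := fun v => inn g v
      map_add' := fun a b => inn_add_right g a b
      map_smul' := fun a v => by simp [inn_smul_right] }
  have hker : Submodule.span ℝ s ≤ LinearMap.ker φ := by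
    rw [Submodule.span_le]
    intro v hv
    exact hg v hv
  rw [hs] at hker
  have : inn g g = 0 := hker (Set.mem_univ g)
  exact inn_self_eq_zero ((inn_comm g g) ▸ this)

end helpers

/-- If `‖ψ‖_{BAC}^* ≤ 1` then the pointwise power `ψ^m` satisfies `‖ψ^m‖^* ≤ C(m)`. -/
theorem dualNorm_pow_le (G : Type) [Fintype G] [Nonempty G]
    (nn : (G → ℝ) → ℝ) (F : Set (G → ℝ)) (c : ℝ → ℝ) (C : ℕ → ℝ)
    (D : (G → ℝ) → (G → ℝ))
    (h : IsQuasiAlgebraPredual G nn F c C D)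
    (ψ : G → ℝ) (hψ : bacDualNorm F D ψ ≤ 1)
    (m : ℕ) (hm : 1 ≤ m) :
    dualNormOf nn (fun x => ψ x ^ m) ≤ C m := by
  classical
  obtain ⟨hnn0, hnndef, hnnsmul, hnnadd⟩ := h.isNorm
  -- coercivity of nn
  obtain ⟨ε, hε, hcoer⟩ := norm_coercive nn (fun g hg => (hnndef g).mp hg) hnnsmul hnnadd
  have hball : ∀ g : G → ℝ, nn g ≤ 1 → ‖g‖ ≤ ε⁻¹ := by
    intro g hg
    rw [← one_div, le_div_iff₀ hε, mul_comm]
    exact (hcoer g).trans hg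
  -- F is nonempty
  have hFne : F.Nonempty := by
    by_contra hFe
    rw [Set.not_nonempty_iff_eq_empty] at hFe
    have hsp := h.spanD
    rw [hFe] at hsp
    simp at hsp
  -- bound on D '' F
  obtain ⟨R, hR⟩ := h.compactD.isBounded.exists_norm_le
  -- Step C: products are bounded against the nn-unit ball
  have hC : ∀ (fs : Fin m → (G → ℝ)), (∀ i, fs i ∈ F) → ∀ g : G → ℝ, nn g ≤ 1 →
      |inn (fun x => ∏ i, D (fs i) x) g| ≤ C m := by
    intro fs hfs g hg
    set p : G → ℝ := fun x => ∏ i, D (fs i) x with hp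
    have hbdd : BddAbove {r : ℝ | ∃ g : G → ℝ, nn g ≤ 1 ∧ r = |inn p g|} := by
      refine ⟨‖p‖ * ε⁻¹, fun r hr => ?_⟩
      obtain ⟨g', hg', rfl⟩ := hr
      exact (abs_inn_le p g').trans (mul_le_mul_of_nonneg_left (hball g' hg') (norm_nonneg p))
    have hmem : |inn p g| ∈ {r : ℝ | ∃ g : G → ℝ, nn g ≤ 1 ∧ r = |inn p g|} := ⟨g, hg, rfl⟩
    exact (le_csSup hbdd hmem).trans (h.dual_prod_le m hm fs hfs)
  -- Step: boundedness of the bacNorm unit ball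
  have hbacset_bdd : ∀ g : G → ℝ, BddAbove {r : ℝ | ∃ f ∈ F, r = |inn g (D f)|} := by
    intro g
    refine ⟨‖g‖ * R, fun r hr => ?_⟩
    obtain ⟨f', hf', rfl⟩ := hr
    exact (abs_inn_le g (D f')).trans
      (mul_le_mul_of_nonneg_left (hR _ ⟨f', hf', rfl⟩) (norm_nonneg g))
  have hbacball : ∃ M : ℝ, 0 ≤ M ∧ ∀ g : G → ℝ, bacNorm F D g ≤ 1 → ‖g‖ ≤ M := by
    obtain ⟨b, hbsub, hbspan, hbindep⟩ := exists_linearIndependent ℝ (D '' F)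
    rw [h.spanD] at hbspan
    have hbfin : b.Finite := hbindep.finite
    haveI := hbfin.fintype
    have hbne : b.Nonempty := by
      by_contra hbe
      rw [Set.not_nonempty_iff_eq_empty] at hbe
      rw [hbe] at hbspan
      simp at hbspan
    haveI : Nonempty b := hbne.to_subtype
    set nn2 : (G → ℝ) → ℝ := fun g => ‖(fun i : b => inn g i.1)‖ with hnn2
    have h0 : ∀ g, nn2 g = 0 → g = 0 := by
      intro g hg
      refine eq_zero_of_inn_vanish hbspan fun v hv => ?_
      have hz : (fun i : b => inn g i.1) = 0 := norm_eq_zero.mp hg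
      exact congrFun hz ⟨v, hv⟩
    have hs : ∀ (a : ℝ) (g), nn2 (a • g) = |a| * nn2 g := by
      intro a g
      have heq : (fun i : b => inn (a • g) i.1) = a • (fun i : b => inn g i.1) := by
        funext i; simp [inn_smul_left]
      rw [hnn2]
      simp only
      rw [heq, norm_smul, Real.norm_eq_abs]
    have ht : ∀ f g, nn2 (f + g) ≤ nn2 f + nn2 g := by
      intro f g
      have heq : (fun i : b => inn (f + g) i.1)
          = (fun i : b => inn f i.1) + (fun i : b => inn g i.1) := by
        funext i; simp [inn_add_left]
      rw [hnn2]
      simp only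
      rw [heq]
      exact norm_add_le _ _
    obtain ⟨ε₂, hε₂, hcoer₂⟩ := norm_coercive nn2 h0 hs ht
    refine ⟨ε₂⁻¹, by positivity, fun g hg => ?_⟩
    have h1 : ∀ v ∈ b, |inn g v| ≤ 1 := by
      intro v hv
      obtain ⟨f', hf', rfl⟩ := hbsub hv
      exact (le_csSup (hbacset_bdd g) ⟨f', hf', rfl⟩).trans hg
    have h2 : nn2 g ≤ 1 := by
      rw [hnn2]
      refine (pi_norm_le_iff_of_nonneg zero_le_one).mpr fun i => ?_
      rw [Real.norm_eq_abs]
      exact h1 i.1 i.2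
    rw [← one_div, le_div_iff₀ hε₂, mul_comm]
    exact (hcoer₂ g).trans h2
  obtain ⟨M, hM0, hbac⟩ := hbacball
  -- Step: membership in the closed convex hull
  set K : Set (G → ℝ) := (D '' F) ∪ ((fun v => -v) '' (D '' F)) with hK
  have hmemcl : ψ ∈ closure ((convexHull ℝ) K) := by
    by_contra hns
    obtain ⟨f, u, hfa, hfψ⟩ := geometric_hahn_banach_closed_point
      ((convex_convexHull ℝ K).closure) isClosed_closure hns
    obtain ⟨f₀, hf₀⟩ := hFne
    have hDK : D f₀ ∈ K := Or.inl ⟨f₀, hf₀, rfl⟩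
    have hnDK : -D f₀ ∈ K := Or.inr ⟨D f₀, ⟨f₀, hf₀, rfl⟩, rfl⟩
    have h0mem : (0 : G → ℝ) ∈ (convexHull ℝ) K := by
      have hcomb := (convex_convexHull ℝ K) (subset_convexHull ℝ K hDK)
        (subset_convexHull ℝ K hnDK)
        (by norm_num : (0:ℝ) ≤ 1/2) (by norm_num : (0:ℝ) ≤ 1/2) (by norm_num : (1:ℝ)/2 + 1/2 = 1)
      have : (1/2 : ℝ) • D f₀ + (1/2 : ℝ) • (-D f₀) = 0 := by
        rw [smul_neg]; abel
      rwa [this] at hcomb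
    have hu0 : 0 < u := by
      have := hfa 0 (subset_closure h0mem)
      simpa using this
    have hcard : (0:ℝ) < (Fintype.card G : ℝ) := by positivity
    set hrep : G → ℝ := fun x => (Fintype.card G : ℝ) * f (Pi.single x 1) with hhrep
    have hfvv : ∀ v : G → ℝ, f v = inn hrep v := by
      intro v
      conv_lhs => rw [← sum_smul_single v]
      rw [map_sum]
      simp only [map_smul, smul_eq_mul]
      unfold inn
      rw [eq_div_iff hcard.ne', Finset.sum_mul]
      refine Finset.sum_congr rfl fun x _ => ?_
      rw [hhrep]
      ring
    set g₀ : G → ℝ := u⁻¹ • hrep with hg₀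
    have hinn : ∀ v, inn g₀ v = u⁻¹ * f v := by
      intro v
      rw [hg₀, inn_smul_left, ← hfvv]
    have hui : 0 < u⁻¹ := inv_pos.mpr hu0
    have huiu : u⁻¹ * u = 1 := inv_mul_cancel₀ hu0.ne'
    have hbn : bacNorm F D g₀ ≤ 1 := by
      refine csSup_le ⟨|inn g₀ (D f₀)|, f₀, hf₀, rfl⟩ ?_
      rintro r ⟨f', hf', rfl⟩
      have h1 : f (D f') < u := hfa _ (subset_closure (subset_convexHull ℝ K
        (Or.inl ⟨f', hf', rfl⟩)))
      have h2 : f (-D f') < u := hfa _ (subset_closure (subset_convexHull ℝ K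
        (Or.inr ⟨D f', ⟨f', hf', rfl⟩, rfl⟩)))
      rw [map_neg] at h2
      rw [hinn, abs_mul, abs_of_pos hui]
      have habs : |f (D f')| ≤ u := abs_le.mpr ⟨by linarith, h1.le⟩
      calc u⁻¹ * |f (D f')| ≤ u⁻¹ * u := by
            exact mul_le_mul_of_nonneg_left habs hui.le
      _ = 1 := huiu
    have hgt : 1 < |inn ψ g₀| := by
      rw [inn_comm, hinn]
      have hlt : u < f ψ := hfψ
      have hpos : 0 < u⁻¹ * f ψ := mul_pos hui (hu0.trans hlt)
      rw [abs_of_pos hpos]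
      nlinarith
    have hbdd' : BddAbove {r : ℝ | ∃ g : G → ℝ, bacNorm F D g ≤ 1 ∧ r = |inn ψ g|} := by
      refine ⟨‖ψ‖ * M, fun r hr => ?_⟩
      obtain ⟨g, hg, rfl⟩ := hr
      exact (abs_inn_le ψ g).trans (mul_le_mul_of_nonneg_left (hbac g hg) (norm_nonneg ψ))
    have hle : |inn ψ g₀| ≤ bacDualNorm F D ψ := le_csSup hbdd' ⟨g₀, hbn, rfl⟩
    rw [bacDualNorm] at hle
    exact absurd hψ (by rw [bacDualNorm]; linarith)
  -- Step: the bound for elements of the convex hull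
  have hkey : ∀ φ ∈ (convexHull ℝ) K, ∀ g : G → ℝ, nn g ≤ 1 →
      |inn (fun x => φ x ^ m) g| ≤ C m := by
    intro φ hφ g hg
    rw [_root_.convexHull_eq] at hφ
    obtain ⟨ι, t, w, z, hw0, hw1, hz, hcm⟩ := hφ
    rw [Finset.centerMass_eq_of_sum_1 _ _ hw1] at hcm
    have hchoice : ∀ i ∈ t, ∃ (a : G → ℝ) (s : ℝ),
        a ∈ F ∧ (s = 1 ∨ s = -1) ∧ z i = s • D a := by
      intro i hi
      rcases hz i hi with ⟨a, ha, hae⟩ | ⟨v, hv, hve⟩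
      · exact ⟨a, 1, ha, Or.inl rfl, by rw [← hae, one_smul]⟩
      · obtain ⟨a, ha, hae⟩ := hv
        refine ⟨a, -1, ha, Or.inr rfl, ?_⟩
        rw [← hve, ← hae]
        funext x
        simp
    choose! ff sg hffF hsg hzeq using hchoice
    set P := Fintype.piFinset (fun _ : Fin m => t) with hP
    have hφx : ∀ x, φ x = ∑ i ∈ t, w i * sg i * D (ff i) x := by
      intro x
      rw [← hcm, Finset.sum_apply]
      refine Finset.sum_congr rfl fun i hi => ?_
      rw [Pi.smul_apply, hzeq i hi]
      simp [mul_assoc]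
    have hpow : (fun x => φ x ^ m)
        = ∑ p ∈ P, ((∏ j, w (p j)) * (∏ j, sg (p j))) • (fun x => ∏ j, D (ff (p j)) x) := by
      funext x
      rw [Finset.sum_apply]
      have h1 : φ x ^ m = ∏ _j : Fin m, (∑ i ∈ t, w i * sg i * D (ff i) x) := by
        simp [hφx x, Finset.prod_const]
      rw [h1, Finset.prod_univ_sum]
      refine Finset.sum_congr rfl fun p _hp => ?_
      rw [Pi.smul_apply, smul_eq_mul, Finset.prod_mul_distrib, Finset.prod_mul_distrib]
    rw [hpow, inn_sum_left]
    calc |∑ p ∈ P, inn (((∏ j, w (p j)) * (∏ j, sg (p j))) •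
            (fun x => ∏ j, D (ff (p j)) x)) g|
        ≤ ∑ p ∈ P, |inn (((∏ j, w (p j)) * (∏ j, sg (p j))) •
            (fun x => ∏ j, D (ff (p j)) x)) g| := Finset.abs_sum_le_sum_abs _ _
      _ ≤ ∑ p ∈ P, (∏ j, w (p j)) * C m := by
          refine Finset.sum_le_sum fun p hp => ?_
          have hwp : ∀ j, p j ∈ t := fun j => (Fintype.mem_piFinset.mp hp) j
          have hw : 0 ≤ ∏ j, w (p j) := Finset.prod_nonneg fun j _ => hw0 _ (hwp j)
          have hsg1 : |∏ j, sg (p j)| = 1 := by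
            rw [Finset.abs_prod]
            exact Finset.prod_eq_one fun j _ => by
              rcases hsg _ (hwp j) with hh | hh <;> simp [hh]
          have hq : |inn (fun x => ∏ j, D (ff (p j)) x) g| ≤ C m :=
            hC (fun j => ff (p j)) (fun j => hffF _ (hwp j)) g hg
          rw [inn_smul_left, abs_mul, abs_mul, hsg1, mul_one, abs_of_nonneg hw]
          exact mul_le_mul_of_nonneg_left hq hw
      _ = C m := by
          rw [← Finset.sum_mul, hP, ← Finset.prod_univ_sum, hw1]
          simp
  -- Step: extend to the closure by continuity, conclude
  have hfinal : ∀ g : G → ℝ, nn g ≤ 1 → |inn (fun x => ψ x ^ m) g| ≤ C m := by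
    intro g hg
    have hcont : Continuous fun φ : G → ℝ => |inn (fun x => φ x ^ m) g| := by
      refine continuous_abs.comp ?_
      unfold inn
      exact Continuous.div_const (continuous_finset_sum _ fun x _ =>
        (((continuous_apply x).pow m).mul continuous_const)) _
    have hclosed : IsClosed {φ : G → ℝ | |inn (fun x => φ x ^ m) g| ≤ C m} :=
      isClosed_le hcont continuous_const
    have hsub : closure ((convexHull ℝ) K) ⊆ {φ : G → ℝ | |inn (fun x => φ x ^ m) g| ≤ C m} :=
      closure_minimal (fun φ hφ => hkey φ hφ g hg) hclosed
    exact hsub hmemcl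
  refine csSup_le ⟨0, 0, ?_, ?_⟩ ?_
  · rw [(hnndef 0).mpr rfl]; exact zero_le_one
  · rw [inn_zero_right]; simp
  · rintro r ⟨g, hg, rfl⟩
    exact hfinal g hg
end

section
/- For every monic irreducible polynomial P with deg P ≤ N summed over, one has Σ_{P monic irreducible, deg P ≤ N} 1/|P| = log N + O_q(1); that is, there is a constant C depending only on q such that |Σ_{P monic irreducible, deg P ≤ N} 1/|P| − log N| ≤ C for all N ≥ 1. -/
open Polynomial Finset

open Polynomial Finset

/-- Gauss identity: sum of degrees of monic irreducibles of degree dividing `n`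
equals `q ^ n`. -/
lemma aux_identity (F : Type) [Field F] [Fintype F] {n : ℕ} (hn : 1 ≤ n)
    (T : Finset F[X]) (hT : ∀ p, p ∈ T ↔ p.Monic ∧ Irreducible p ∧ p.natDegree ∣ n) :
    ∑ P ∈ T, P.natDegree = Fintype.card F ^ n := by
  classical
  set q := Fintype.card F with hq
  have hq1 : 1 < q := Fintype.one_lt_card
  obtain ⟨p, hc⟩ := CharP.exists F
  haveI : CharP F p := hc
  obtain ⟨m, hp, hqm⟩ := FiniteField.card F p
  haveI : Fact p.Prime := ⟨hp⟩
  have hpq : p ∣ q ^ n := by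
    refine dvd_pow ?_ (by omega)
    rw [hq, hqm]
    exact dvd_pow_self p m.pos.ne'
  set f : F[X] := X ^ q ^ n - X with hf
  have hsepf : f.Separable := galois_poly_separable p (q ^ n) hpq
  have hf0 : f ≠ 0 := FiniteField.X_pow_card_pow_sub_X_ne_zero F (by omega) hq1
  have hfd : f.natDegree = q ^ n := FiniteField.X_pow_card_pow_sub_X_natDegree_eq F (by omega) hq1
  set K := f.SplittingField with hK
  haveI : FiniteDimensional F K := IsSplittingField.finiteDimensional K f
  haveI : Finite K := Module.finite_of_finite F
  haveI : Fintype K := Fintype.ofFinite K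
  haveI : CharP K p := charP_of_injective_algebraMap (algebraMap F K).injective p
  have hqn : q ^ n = p ^ (m * n) := by rw [hq, hqm, pow_mul]
  have hcomm : ∀ r : F, (algebraMap F K r) ^ q ^ n = algebraMap F K r := by
    intro r
    rw [← map_pow]
    congr 1
    rw [hq]
    exact FiniteField.pow_card_pow n r
  let φ : K →ₐ[F] K :=
    { toRingHom := iterateFrobenius K p (m * n)
      commutes' := fun r => by
        show iterateFrobenius K p (m * n) (algebraMap F K r) = _
        rw [iterateFrobenius_def, ← hqn]
        exact hcomm r }
  have hφ : ∀ x : K, φ x = x ^ q ^ n := fun x => by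
    show iterateFrobenius K p (m * n) x = _
    rw [iterateFrobenius_def, ← hqn]
  have hall : ∀ x : K, x ^ q ^ n = x := by
    have htop : (⊤ : Subalgebra F K) ≤ AlgHom.equalizer φ (AlgHom.id F K) := by
      rw [← Polynomial.SplittingField.adjoin_rootSet f]
      apply Algebra.adjoin_le
      intro x hx
      rw [mem_rootSet_of_ne hf0] at hx
      have hx' : x ^ q ^ n - x = 0 := by simpa [f] using hx
      show φ x = x
      rw [hφ, sub_eq_zero] at *
      exact hx'
    intro x
    have hx := htop (Algebra.mem_top : x ∈ (⊤ : Subalgebra F K))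
    have : φ x = x := hx
    rwa [hφ] at this
  have hcardK : Fintype.card K = q ^ n := by
    have h1 : (f.map (algebraMap F K)).roots.toFinset = Finset.univ := by
      ext x
      simp only [Multiset.mem_toFinset, mem_roots (map_ne_zero hf0 (f := algebraMap F K)),
        IsRoot, eval_map, ← aeval_def, Finset.mem_univ, iff_true]
      simp [f, hall x]
    calc Fintype.card K = (f.map (algebraMap F K)).roots.toFinset.card := by
            rw [h1, Finset.card_univ]
      _ = Multiset.card (f.map (algebraMap F K)).roots :=
            Multiset.toFinset_card_of_nodup (nodup_roots hsepf.map)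
      _ = f.natDegree := by rw [← (SplittingField.splits f).natDegree_eq_card_roots, natDegree_map]
      _ = q ^ n := hfd
  have hfinrank : Module.finrank F K = n := by
    have hc2 := Module.card_eq_pow_finrank (K := F) (V := K)
    rw [hcardK, ← hq] at hc2
    exact (Nat.pow_right_injective hq1 hc2).symm
  -- every element's minimal polynomial lies in T
  have maps : ∀ x : K, minpoly F x ∈ T := by
    intro x
    have hint : IsIntegral F x := IsIntegral.of_finite F x
    refine (hT _).mpr ⟨minpoly.monic hint, minpoly.irreducible hint, ?_⟩
    have := minpoly.degree_dvd hint
    rwa [hfinrank] at this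
  -- fibers have the right cardinality
  have step : ∀ P ∈ T, (univ.filter fun x : K => minpoly F x = P).card = P.natDegree := by
    intro P hP
    obtain ⟨hmon, hirr, hdvd⟩ := (hT P).mp hP
    have hP0 : P ≠ 0 := hirr.ne_zero
    haveI : Fact (Irreducible P) := ⟨hirr⟩
    -- the adjoin-root field
    set L := AdjoinRoot P with hL
    let pb : PowerBasis F L := AdjoinRoot.powerBasis hP0
    haveI : FiniteDimensional F L := Module.Finite.of_basis pb.basis
    haveI : Finite L := Module.finite_of_finite F
    haveI : Fintype L := Fintype.ofFinite L
    have hfrL : Module.finrank F L = P.natDegree := by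
      rw [pb.finrank]
      exact AdjoinRoot.powerBasis_dim hP0
    have hcardL : Fintype.card L = q ^ P.natDegree := by
      rw [Module.card_eq_pow_finrank (K := F) (V := L), hfrL, hq]
    obtain ⟨k, hk⟩ := hdvd
    have hroot_pow : (AdjoinRoot.root P) ^ q ^ n = AdjoinRoot.root P := by
      have h := FiniteField.pow_card_pow k (AdjoinRoot.root P)
      rwa [hcardL, ← pow_mul, ← hk] at h
    have hminp : minpoly F (AdjoinRoot.root P) = P := by
      rw [AdjoinRoot.minpoly_root hP0, hmon.leadingCoeff, inv_one, map_one, mul_one]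
    have Pdvd : P ∣ f := by
      rw [← hminp]
      apply minpoly.dvd
      simp [f, hroot_pow]
    have hsplit : Splits (P.map (algebraMap F K)) :=
      Splits.of_dvd (SplittingField.splits f) (map_ne_zero hf0) (Polynomial.map_dvd _ Pdvd)
    have hsep : P.Separable := hsepf.of_dvd Pdvd
    have hfib : (univ.filter fun x : K => minpoly F x = P)
        = (P.map (algebraMap F K)).roots.toFinset := by
      ext x
      simp only [mem_filter, mem_univ, true_and, Multiset.mem_toFinset,
        mem_roots (map_ne_zero hP0 (f := algebraMap F K)), IsRoot, eval_map, ← aeval_def]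
      constructor
      · rintro rfl; exact minpoly.aeval F x
      · intro hx
        exact (minpoly.eq_of_irreducible_of_monic hirr hx hmon).symm
    rw [hfib, Multiset.toFinset_card_of_nodup (nodup_roots (hsep.map)),
      ← hsplit.natDegree_eq_card_roots, natDegree_map]
  have hfib := Finset.card_eq_sum_card_fiberwise
    (f := fun x : K => minpoly F x) (s := univ) (t := T) (fun x _ => maps x)
  rw [Finset.card_univ, hcardK] at hfib
  rw [hfib]
  exact (Finset.sum_congr rfl step).symm

open Polynomial Finset

lemma aux_geom_nat (q : ℕ) (hq : 2 ≤ q) (m : ℕ) :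
    ∑ d ∈ range (m + 1), q ^ d ≤ 2 * q ^ m := by
  induction m with
  | zero => simpa using hq
  | succ m ih =>
    rw [Finset.sum_range_succ]
    have h1 : 2 * q ^ m ≤ q ^ (m + 1) := by
      rw [pow_succ]
      calc 2 * q ^ m = q ^ m * 2 := by ring
        _ ≤ q ^ m * q := Nat.mul_le_mul_left _ hq
    omega

lemma aux_term (q d pn : ℕ) (hq : 2 ≤ q) (hd : 1 ≤ d)
    (hu : d * pn ≤ q ^ d) (hl : q ^ d ≤ d * pn + 2 * q ^ (d / 2)) :
    |(pn : ℝ) / (q : ℝ) ^ d - 1 / (d : ℝ)| ≤ 2 * (3 / 4 : ℝ) ^ d := by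
  have hq0 : (2 : ℝ) ≤ (q : ℝ) := by exact_mod_cast hq
  have hQ : (0 : ℝ) < (q : ℝ) ^ d := by positivity
  have hQh : (0 : ℝ) < (q : ℝ) ^ (d / 2) := by positivity
  have hD : (1 : ℝ) ≤ (d : ℝ) := by exact_mod_cast hd
  have hD0 : (0 : ℝ) < (d : ℝ) := by linarith
  have hu' : (d : ℝ) * (pn : ℝ) ≤ (q : ℝ) ^ d := by exact_mod_cast hu
  have hl' : (q : ℝ) ^ d ≤ (d : ℝ) * (pn : ℝ) + 2 * (q : ℝ) ^ (d / 2) := by exact_mod_cast hl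
  have h1 : (pn : ℝ) / (q : ℝ) ^ d - 1 / (d : ℝ)
      = ((d : ℝ) * (pn : ℝ) - (q : ℝ) ^ d) / ((d : ℝ) * (q : ℝ) ^ d) := by
    field_simp
  have h2 : |(d : ℝ) * (pn : ℝ) - (q : ℝ) ^ d| ≤ 2 * (q : ℝ) ^ (d / 2) :=
    abs_le.mpr ⟨by linarith, by linarith⟩
  have h3 : |(pn : ℝ) / (q : ℝ) ^ d - 1 / (d : ℝ)|
      ≤ 2 * (q : ℝ) ^ (d / 2) / (q : ℝ) ^ d := by
    rw [h1, abs_div, abs_of_pos (by positivity : (0 : ℝ) < (d : ℝ) * (q : ℝ) ^ d)]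
    calc |(d : ℝ) * (pn : ℝ) - (q : ℝ) ^ d| / ((d : ℝ) * (q : ℝ) ^ d)
        ≤ (2 * (q : ℝ) ^ (d / 2)) / ((d : ℝ) * (q : ℝ) ^ d) :=
          (div_le_div_iff_of_pos_right (by positivity)).mpr h2
      _ ≤ 2 * (q : ℝ) ^ (d / 2) / (q : ℝ) ^ d := by
          gcongr
          nlinarith
  refine h3.trans ?_
  -- q^(d/2) * (4/3)^d ≤ q^d
  set e := d - d / 2 with he
  have hde : d = d / 2 + e := by omega
  have h2e : d ≤ 2 * e := by omega
  have key : (4 / 3 : ℝ) ^ d ≤ (q : ℝ) ^ e := by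
    calc (4 / 3 : ℝ) ^ d ≤ (4 / 3 : ℝ) ^ (2 * e) := by
          apply pow_le_pow_right₀ (by norm_num) h2e
      _ = (16 / 9 : ℝ) ^ e := by rw [pow_mul]; norm_num
      _ ≤ (2 : ℝ) ^ e := by apply pow_le_pow_left₀ (by norm_num) (by norm_num)
      _ ≤ (q : ℝ) ^ e := by apply pow_le_pow_left₀ (by norm_num) hq0
  rw [div_le_iff₀ hQ]
  have hqd : (q : ℝ) ^ d = (q : ℝ) ^ (d / 2) * (q : ℝ) ^ e := by rw [← pow_add, ← hde]
  have hmul : (3 / 4 : ℝ) ^ d * (4 / 3 : ℝ) ^ d = 1 := by rw [← mul_pow]; norm_num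
  have h5 := mul_le_mul_of_nonneg_left key
    (by positivity : (0 : ℝ) ≤ (3 / 4 : ℝ) ^ d * (q : ℝ) ^ (d / 2))
  have h6 : (3 / 4 : ℝ) ^ d * (q : ℝ) ^ (d / 2) * (4 / 3 : ℝ) ^ d = (q : ℝ) ^ (d / 2) := by
    linear_combination (q : ℝ) ^ (d / 2) * hmul
  rw [h6] at h5
  rw [hqd]
  nlinarith [h5]


/-- **Mertens-type estimate for function fields.** The sum of `1/|P|` over monic
irreducible polynomials `P` of degree at most `N` equals `log N + O_q(1)`. -/
theorem sum_inv_norm_irreducible (q : ℕ) (hq : IsPrimePow q) :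
    ∃ C : ℝ, ∀ (F : Type) [Field F] [Fintype F], Fintype.card F = q →
      ∀ S : ℕ → Finset (Polynomial F),
        (∀ N p, p ∈ S N ↔ p.Monic ∧ Irreducible p ∧ p.natDegree ≤ N) →
        ∀ N : ℕ, 1 ≤ N →
          |(∑ p ∈ S N, (1 : ℝ) / (q : ℝ) ^ p.natDegree) - Real.log N| ≤ C := by
  classical
  use 9
  intro F _ _ hcard S hS N hN
  have hq2 : 2 ≤ q := by rw [← hcard]; exact Fintype.one_lt_card
  set π : ℕ → ℕ := fun d => ((S d).filter (fun p => p.natDegree = d)).card with hπ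
  have hfilter : ∀ M d : ℕ, d ≤ M →
      (S M).filter (fun p => p.natDegree = d) = (S d).filter (fun p => p.natDegree = d) := by
    intro M d hdM
    ext p
    simp only [Finset.mem_filter, hS]
    constructor
    · rintro ⟨⟨h1, h2, h3⟩, h4⟩; exact ⟨⟨h1, h2, by omega⟩, h4⟩
    · rintro ⟨⟨h1, h2, h3⟩, h4⟩; exact ⟨⟨h1, h2, by omega⟩, h4⟩
  have hπ0 : π 0 = 0 := by
    rw [hπ]
    simp only
    rw [Finset.card_eq_zero, Finset.eq_empty_iff_forall_notMem]
    intro p hp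
    obtain ⟨hp1, hp2⟩ := Finset.mem_filter.mp hp
    obtain ⟨h1, h2, _⟩ := (hS 0 p).mp hp1
    have : p = 1 := h1.natDegree_eq_zero.mp hp2
    exact h2.not_isUnit (this ▸ isUnit_one)
  -- the Gauss identity, in terms of π
  have hid : ∀ n : ℕ, 1 ≤ n → q ^ n = ∑ d ∈ n.divisors, d * π d := by
    intro n hn
    have hT : ∀ p : Polynomial F, p ∈ (S n).filter (fun p => p.natDegree ∣ n) ↔
        p.Monic ∧ Irreducible p ∧ p.natDegree ∣ n := by
      intro p
      simp only [Finset.mem_filter, hS]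
      constructor
      · rintro ⟨⟨h1, h2, _⟩, h4⟩; exact ⟨h1, h2, h4⟩
      · rintro ⟨h1, h2, h4⟩; exact ⟨⟨h1, h2, Nat.le_of_dvd (by omega) h4⟩, h4⟩
    have hgauss := aux_identity F hn _ hT
    rw [hcard] at hgauss
    have hmaps : ∀ p ∈ (S n).filter (fun p => p.natDegree ∣ n), p.natDegree ∈ n.divisors := by
      intro p hp
      obtain ⟨_, _, h4⟩ := (hT p).mp hp
      exact Nat.mem_divisors.mpr ⟨h4, by omega⟩
    have hsplit := Finset.sum_fiberwise_of_maps_to hmaps (fun p => p.natDegree)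
    rw [← hgauss, ← hsplit]
    refine Finset.sum_congr rfl fun d hd => ?_
    obtain ⟨hdvd, -⟩ := Nat.mem_divisors.mp hd
    have hcongr : ∀ p ∈ ((S n).filter (fun p => p.natDegree ∣ n)).filter
        (fun p => p.natDegree = d), p.natDegree = d := fun p hp => (Finset.mem_filter.mp hp).2
    rw [Finset.sum_congr rfl hcongr, Finset.sum_const, smul_eq_mul, mul_comm]
    congr 1
    have h1 : ((S n).filter (fun p => p.natDegree ∣ n)).filter (fun p => p.natDegree = d)
        = (S n).filter (fun p => p.natDegree = d) := by
      ext p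
      simp only [Finset.mem_filter]
      constructor
      · rintro ⟨⟨h1, _⟩, h3⟩; exact ⟨h1, h3⟩
      · rintro ⟨h1, h3⟩; exact ⟨⟨h1, h3 ▸ hdvd⟩, h3⟩
    rw [h1, hfilter n d (Nat.le_of_dvd (by omega) hdvd)]
  -- upper and lower bounds
  have hub : ∀ n : ℕ, 1 ≤ n → n * π n ≤ q ^ n := by
    intro n hn
    rw [hid n hn]
    exact Finset.single_le_sum (f := fun d => d * π d) (fun d _ => Nat.zero_le _)
      (Nat.mem_divisors_self n (by omega))
  have hlb : ∀ n : ℕ, 1 ≤ n → q ^ n ≤ n * π n + 2 * q ^ (n / 2) := by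
    intro n hn
    have h := hid n hn
    have hmem : n ∈ n.divisors := Nat.mem_divisors_self n (by omega)
    rw [← Finset.add_sum_erase _ _ hmem] at h
    have hrest : ∑ d ∈ n.divisors.erase n, d * π d ≤ 2 * q ^ (n / 2) := by
      calc ∑ d ∈ n.divisors.erase n, d * π d ≤ ∑ d ∈ n.divisors.erase n, q ^ d := by
            refine Finset.sum_le_sum fun d hd => ?_
            exact hub d (Nat.pos_of_mem_divisors (Finset.mem_of_mem_erase hd))
        _ ≤ ∑ d ∈ range (n / 2 + 1), q ^ d := by
            refine Finset.sum_le_sum_of_subset fun d hd => ?_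
            have hne := Finset.ne_of_mem_erase hd
            obtain ⟨hdvd, hn0⟩ := Nat.mem_divisors.mp (Finset.mem_of_mem_erase hd)
            obtain ⟨k, hk⟩ := hdvd
            have hk2 : 2 ≤ k := by
              rcases Nat.lt_or_ge k 2 with hlt | hge
              · interval_cases k <;> omega
              · exact hge
            have h2d : 2 * d ≤ n := by nlinarith
            rw [Finset.mem_range]
            omega
        _ ≤ 2 * q ^ (n / 2) := aux_geom_nat q hq2 _
    omega
  -- rewrite the sum by degree
  have hA : (∑ p ∈ S N, (1 : ℝ) / (q : ℝ) ^ p.natDegree)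
      = ∑ d ∈ range (N + 1), (π d : ℝ) / (q : ℝ) ^ d := by
    have hmaps : ∀ p ∈ S N, p.natDegree ∈ range (N + 1) := fun p hp => by
      have := ((hS N p).mp hp).2.2
      rw [Finset.mem_range]
      omega
    rw [← Finset.sum_fiberwise_of_maps_to hmaps (fun p => (1 : ℝ) / (q : ℝ) ^ p.natDegree)]
    refine Finset.sum_congr rfl fun d hd => ?_
    have hc : ∀ p ∈ (S N).filter (fun p => p.natDegree = d),
        (1 : ℝ) / (q : ℝ) ^ p.natDegree = (1 : ℝ) / (q : ℝ) ^ d := fun p hp => by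
      rw [(Finset.mem_filter.mp hp).2]
    rw [Finset.sum_congr rfl hc, Finset.sum_const,
      hfilter N d (by have := Finset.mem_range.mp hd; omega), nsmul_eq_mul, mul_one_div]
  -- compare with the harmonic sum
  have hq2' : (2 : ℝ) ≤ (q : ℝ) := by exact_mod_cast hq2
  have hterm : ∀ d : ℕ, |(π (d + 1) : ℝ) / (q : ℝ) ^ (d + 1) - 1 / ((d : ℝ) + 1)|
      ≤ 2 * (3 / 4 : ℝ) ^ (d + 1) := by
    intro d
    have h := aux_term q (d + 1) (π (d + 1)) hq2 (by omega)
      (hub (d + 1) (by omega)) (hlb (d + 1) (by omega))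
    push_cast at h ⊢
    exact h
  set A : ℝ := ∑ d ∈ range N, (π (d + 1) : ℝ) / (q : ℝ) ^ (d + 1) with hAdef
  have hA2 : ∑ d ∈ range (N + 1), (π d : ℝ) / (q : ℝ) ^ d = A := by
    rw [Finset.sum_range_succ', hπ0]
    simp [hAdef]
  set H : ℝ := ∑ d ∈ range N, (1 : ℝ) / ((d : ℝ) + 1) with hH
  have herr : |A - H| ≤ 8 := by
    rw [hAdef, hH, ← Finset.sum_sub_distrib]
    refine (Finset.abs_sum_le_sum_abs _ _).trans ?_
    calc ∑ d ∈ range N, |(π (d + 1) : ℝ) / (q : ℝ) ^ (d + 1) - 1 / ((d : ℝ) + 1)|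
        ≤ ∑ d ∈ range N, 2 * (3 / 4 : ℝ) ^ (d + 1) :=
          Finset.sum_le_sum fun d _ => hterm d
      _ ≤ 8 := by
          have hgeom := geom_sum_eq (by norm_num : (3 / 4 : ℝ) ≠ 1) N
          have h1 : ∑ d ∈ range N, 2 * (3 / 4 : ℝ) ^ (d + 1)
              = (3 / 2) * ∑ d ∈ range N, (3 / 4 : ℝ) ^ d := by
            rw [Finset.mul_sum]
            refine Finset.sum_congr rfl fun d _ => ?_
            rw [pow_succ']
            ring
          have h2 : (0 : ℝ) ≤ (3 / 4 : ℝ) ^ N := by positivity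
          have h3 : ((3 / 4 : ℝ) ^ N - 1) / (3 / 4 - 1) = 4 * (1 - (3 / 4 : ℝ) ^ N) := by ring
          rw [h1, hgeom, h3]
          nlinarith
  have hHlog : |H - Real.log N| ≤ 1 := by
    have hharm : H = ((harmonic N : ℚ) : ℝ) := by
      rw [hH, harmonic]
      push_cast
      refine Finset.sum_congr rfl fun d _ => ?_
      rw [one_div]
    have hN1 : (1 : ℝ) ≤ (N : ℝ) := by exact_mod_cast hN
    have h1 : Real.log N ≤ ((harmonic N : ℚ) : ℝ) := by
      refine le_trans ?_ (log_add_one_le_harmonic N)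
      have : ((N : ℝ)) ≤ ((N + 1 : ℕ) : ℝ) := by push_cast; linarith
      exact Real.log_le_log (by linarith) this
    have h2 : ((harmonic N : ℚ) : ℝ) ≤ 1 + Real.log N := harmonic_le_one_add_log N
    rw [hharm, abs_le]
    constructor <;> linarith
  rw [hA, hA2]
  calc |A - Real.log N| ≤ |A - H| + |H - Real.log N| := abs_sub_le A H (Real.log N)
    _ ≤ 9 := by linarith
end

section
/- (Divisor bound) There is a constant C depending only on q such that every nonzero polynomial f ∈ 𝔽_q[t] of degree N ≥ 2 has at most q^{C·N/log N} monic divisors; equivalently, d(f) ≤ q^{O_q(N/log N)} where d(f) denotes the number of monic divisors of f. -/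
set_option maxHeartbeats 1000000

open Polynomial UniqueFactorizationMonoid Real

section MultisetAux

variable {α : Type*} [DecidableEq α]

noncomputable instance subMultisetFintype (m : Multiset α) : Fintype {s : Multiset α // s ≤ m} :=
  Fintype.subtype m.powerset.toFinset (by simp [Multiset.mem_powerset])

lemma multiset_sum_le_sum {s t : Multiset ℕ} (h : s ≤ t) : s.sum ≤ t.sum := by
  obtain ⟨u, rfl⟩ := Multiset.le_iff_exists_add.mp h
  simp

lemma nat_card_sub_le_two_pow (m : Multiset α) :
    Nat.card {s : Multiset α // s ≤ m} ≤ 2 ^ Multiset.card m := by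
  rw [Nat.card_eq_fintype_card,
    Fintype.card_of_subtype m.powerset.toFinset (by simp [Multiset.mem_powerset])]
  exact (Multiset.toFinset_card_le _).trans_eq (Multiset.card_powerset m)

lemma nat_card_sub_le_count (m : Multiset α) :
    Nat.card {s : Multiset α // s ≤ m} ≤ (Multiset.card m + 1) ^ m.toFinset.card := by
  have key : ∀ s : {s : Multiset α // s ≤ m}, ∀ a : α,
      (s : Multiset α).count a < Multiset.card m + 1 := fun s a =>
    Nat.lt_succ_of_le ((Multiset.count_le_card a _).trans (Multiset.card_le_card s.2))
  have hinj : Function.Injective (fun s : {s : Multiset α // s ≤ m} =>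
      fun a : m.toFinset => (⟨(s : Multiset α).count (a : α), key s (a : α)⟩ :
        Fin (Multiset.card m + 1))) := by
    intro s t h
    apply Subtype.ext
    ext a
    by_cases ha : a ∈ m.toFinset
    · have := congrFun h ⟨a, ha⟩
      simpa using congrArg Fin.val this
    · have ham : a ∉ m := fun hc => ha (Multiset.mem_toFinset.mpr hc)
      have h1 : (s : Multiset α).count a = 0 :=
        Nat.le_zero.mp ((Multiset.count_le_of_le a s.2).trans
          (le_of_eq (Multiset.count_eq_zero_of_notMem ham)))
      have h2 : (t : Multiset α).count a = 0 :=
        Nat.le_zero.mp ((Multiset.count_le_of_le a t.2).trans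
          (le_of_eq (Multiset.count_eq_zero_of_notMem ham)))
      rw [h1, h2]
  calc Nat.card {s : Multiset α // s ≤ m}
      ≤ Nat.card (m.toFinset → Fin (Multiset.card m + 1)) :=
        Nat.card_le_card_of_injective _ hinj
    _ = (Multiset.card m + 1) ^ m.toFinset.card := by
        rw [Nat.card_eq_fintype_card, Fintype.card_fun, Fintype.card_coe, Fintype.card_fin]

lemma nat_card_sub_split (m : Multiset α) (P : α → Prop) [DecidablePred P] :
    Nat.card {s : Multiset α // s ≤ m} ≤
      Nat.card {s : Multiset α // s ≤ m.filter P} *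
      Nat.card {s : Multiset α // s ≤ m.filter (fun a => ¬ P a)} := by
  rw [← Nat.card_prod]
  refine Nat.card_le_card_of_injective (fun s =>
    (⟨(s : Multiset α).filter P, Multiset.filter_le_filter P s.2⟩,
     ⟨(s : Multiset α).filter (fun a => ¬ P a),
       Multiset.filter_le_filter _ s.2⟩)) ?_
  intro s t h
  have h1 : (s : Multiset α).filter P = (t : Multiset α).filter P :=
    Subtype.ext_iff.mp (congrArg Prod.fst h)
  have h2 : (s : Multiset α).filter (fun a => ¬ P a)
      = (t : Multiset α).filter (fun a => ¬ P a) :=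
    Subtype.ext_iff.mp (congrArg Prod.snd h)
  apply Subtype.ext
  rw [← Multiset.filter_add_not P (s : Multiset α),
    ← Multiset.filter_add_not P (t : Multiset α), h1, h2]

end MultisetAux

lemma card_small_degree {F : Type} [Field F] [Fintype F] [DecidableEq F] (K : ℕ)
    (S : Finset (Polynomial F)) (h : ∀ p ∈ S, p.natDegree < K) :
    S.card ≤ Fintype.card F ^ K := by
  have hinj : Set.InjOn (fun p : Polynomial F => fun i : Fin K => p.coeff i) S := by
    intro p hp p' hp' hpq
    ext n
    by_cases hn : n < K
    · exact congrFun hpq ⟨n, hn⟩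
    · rw [Polynomial.coeff_eq_zero_of_natDegree_lt ((h p hp).trans_le (le_of_not_gt hn)),
        Polynomial.coeff_eq_zero_of_natDegree_lt ((h p' hp').trans_le (le_of_not_gt hn))]
  calc S.card ≤ (Finset.univ : Finset (Fin K → F)).card :=
        Finset.card_le_card_of_injOn _ (fun _ _ => Finset.mem_univ _) hinj
    _ = Fintype.card F ^ K := by simp [Fintype.card_fun]

lemma divisors_inj {F : Type} [Field F] [DecidableEq F] (f : Polynomial F) (hf : f ≠ 0) :
    Nat.card {d : Polynomial F // d.Monic ∧ d ∣ f} ≤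
      Nat.card {s : Multiset (Polynomial F) // s ≤ normalizedFactors f} := by
  refine Nat.card_le_card_of_injective (fun d => ⟨normalizedFactors d.1,
    (dvd_iff_normalizedFactors_le_normalizedFactors d.2.1.ne_zero hf).mp d.2.2⟩) ?_
  intro d e h
  have h' : normalizedFactors d.1 = normalizedFactors e.1 :=
    Subtype.ext_iff.mp h
  have hd := prod_normalizedFactors d.2.1.ne_zero
  have he := prod_normalizedFactors e.2.1.ne_zero
  exact Subtype.ext (Polynomial.eq_of_monic_of_associated d.2.1 e.2.1
    (hd.symm.trans (h' ▸ he)))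

lemma analytic_bound (q N K a : ℕ) (hq : 2 ≤ q) (hN : 2 ≤ N)
    (hK1 : (K : ℝ) ≤ Real.log N / (2 * Real.log q) + 1)
    (hK2 : Real.log N / (2 * Real.log q) ≤ (K : ℝ))
    (ha : a * K ≤ N) :
    ((N : ℝ) + 1) ^ (q ^ K) * 2 ^ a ≤
      (q : ℝ) ^ ((128 * q / Real.log q + 2 * Real.log q) * N / Real.log N) := by
  have hq1 : (1 : ℝ) < q := by exact_mod_cast hq
  have hq0 : (0 : ℝ) < q := by linarith
  have hN1 : (1 : ℝ) < N := by exact_mod_cast hN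
  have hN0 : (0 : ℝ) < N := by linarith
  have hlq : 0 < Real.log q := Real.log_pos hq1
  have hL : 0 < Real.log N := Real.log_pos hN1
  set lq := Real.log q with hlqdef
  set L := Real.log N with hLdef
  -- rewrite RHS as exp
  rw [Real.rpow_def_of_pos hq0]
  -- rewrite LHS as exp
  have hlhs : ((N : ℝ) + 1) ^ (q ^ K) * 2 ^ a =
      Real.exp ((q ^ K : ℕ) * Real.log ((N : ℝ) + 1) + a * Real.log 2) := by
    rw [Real.exp_add]
    congr 1
    · rw [← Real.rpow_natCast ((N : ℝ) + 1), Real.rpow_def_of_pos (by linarith), mul_comm]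
    · rw [← Real.rpow_natCast (2 : ℝ), Real.rpow_def_of_pos (by norm_num), mul_comm]
  rw [hlhs]
  apply Real.exp_le_exp.mpr
  -- key bounds
  have hsqrt : (N : ℝ) ^ ((1 : ℝ) / 2) * (N : ℝ) ^ ((1 : ℝ) / 2) = (N : ℝ) := by
    rw [← Real.rpow_add hN0]; norm_num
  have hsqrt0 : 0 ≤ (N : ℝ) ^ ((1 : ℝ) / 2) := Real.rpow_nonneg (le_of_lt hN0) _
  -- B1 : q^K ≤ q * sqrt N
  have hB1 : ((q ^ K : ℕ) : ℝ) ≤ q * (N : ℝ) ^ ((1 : ℝ) / 2) := by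
    have e1 : ((q ^ K : ℕ) : ℝ) = (q : ℝ) ^ ((K : ℕ) : ℝ) := by
      rw [Real.rpow_natCast]; push_cast; ring
    rw [e1]
    have e2 : (q : ℝ) ^ ((K : ℕ) : ℝ) ≤ (q : ℝ) ^ (L / (2 * lq) + 1) :=
      Real.rpow_le_rpow_of_exponent_le (le_of_lt hq1) hK1
    have e3 : (q : ℝ) ^ (L / (2 * lq) + 1) = (q : ℝ) ^ (L / (2 * lq)) * q := by
      rw [Real.rpow_add hq0, Real.rpow_one]
    have e4 : (q : ℝ) ^ (L / (2 * lq)) = (N : ℝ) ^ ((1 : ℝ) / 2) := by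
      rw [Real.rpow_def_of_pos hq0, Real.rpow_def_of_pos hN0]
      congr 1
      field_simp
      ring
    calc (q : ℝ) ^ ((K : ℕ) : ℝ) ≤ (q : ℝ) ^ (L / (2 * lq) + 1) := e2
      _ = (N : ℝ) ^ ((1 : ℝ) / 2) * q := by rw [e3, e4]
      _ = q * (N : ℝ) ^ ((1 : ℝ) / 2) := mul_comm _ _
  -- B2 : log (N+1) ≤ 2 L
  have hB2 : Real.log ((N : ℝ) + 1) ≤ 2 * L := by
    have hN2 : (2 : ℝ) ≤ (N : ℝ) := by exact_mod_cast hN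
    have h1 : (N : ℝ) + 1 ≤ (N : ℝ) ^ 2 := by nlinarith
    calc Real.log ((N : ℝ) + 1) ≤ Real.log ((N : ℝ) ^ 2) :=
          Real.log_le_log (by linarith) h1
      _ = 2 * L := by rw [Real.log_pow]; push_cast; ring
  -- B3 : L^2 ≤ 64 sqrt N
  have hB3 : L ^ 2 ≤ 64 * (N : ℝ) ^ ((1 : ℝ) / 2) := by
    set u := (N : ℝ) ^ ((1 : ℝ) / 8) with hu
    have hu0 : 0 ≤ u := Real.rpow_nonneg (le_of_lt hN0) _
    have hu1 : 1 ≤ u := Real.one_le_rpow (le_of_lt hN1) (by norm_num)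
    have h8 : L ≤ 8 * u := by
      have := Real.log_le_rpow_div (le_of_lt hN0) (show (0:ℝ) < 1/8 by norm_num)
      rw [hLdef]
      calc Real.log N ≤ (N : ℝ) ^ ((1:ℝ)/8) / (1/8) := this
        _ = 8 * u := by rw [hu]; ring
    have hu4 : u ^ 4 = (N : ℝ) ^ ((1 : ℝ) / 2) := by
      rw [hu, ← Real.rpow_natCast ((N : ℝ) ^ ((1:ℝ)/8)) 4, ← Real.rpow_mul (le_of_lt hN0)]
      norm_num
    have hL0 : 0 ≤ L := le_of_lt hL
    nlinarith [sq_nonneg u, sq_nonneg (u - 1), sq_nonneg (u * u - u)]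
  -- term 1
  have ht1 : ((q ^ K : ℕ) : ℝ) * Real.log ((N : ℝ) + 1) ≤ 128 * q * N / L := by
    have step : ((q ^ K : ℕ) : ℝ) * Real.log ((N : ℝ) + 1) ≤
        (q * (N : ℝ) ^ ((1 : ℝ) / 2)) * (2 * L) := by
      apply mul_le_mul hB1 hB2 (Real.log_nonneg (by linarith)) (by positivity)
    refine step.trans ?_
    rw [le_div_iff₀ hL]
    nlinarith [mul_nonneg hsqrt0 (le_of_lt hL), sq_nonneg L]
  -- term 2
  have ht2 : (a : ℝ) * Real.log 2 ≤ 2 * lq ^ 2 * N / L := by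
    have hlog2 : Real.log 2 ≤ lq := Real.log_le_log (by norm_num) (by exact_mod_cast hq)
    have hlog2' : 0 ≤ Real.log 2 := Real.log_nonneg (by norm_num)
    have haN : (a : ℝ) * L ≤ 2 * N * lq := by
      have haK : (a : ℝ) * (K : ℝ) ≤ (N : ℝ) := by exact_mod_cast ha
      have ha0 : (0 : ℝ) ≤ a := Nat.cast_nonneg a
      have h1 : (a : ℝ) * (L / (2 * lq)) ≤ (N : ℝ) :=
        le_trans (mul_le_mul_of_nonneg_left hK2 ha0) haK
      have h2 : (a : ℝ) * L = ((a : ℝ) * (L / (2 * lq))) * (2 * lq) := by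
        field_simp
      rw [h2]
      calc ((a : ℝ) * (L / (2 * lq))) * (2 * lq) ≤ (N : ℝ) * (2 * lq) :=
            mul_le_mul_of_nonneg_right h1 (by positivity)
        _ = 2 * N * lq := by ring
    have : (a : ℝ) ≤ 2 * N * lq / L := by rw [le_div_iff₀ hL]; linarith
    calc (a : ℝ) * Real.log 2 ≤ (2 * N * lq / L) * lq := by
          apply mul_le_mul this hlog2 hlog2' (by positivity)
      _ = 2 * lq ^ 2 * N / L := by ring
  have hrhs : lq * ((128 * q / lq + 2 * lq) * N / L) =
      128 * q * N / L + 2 * lq ^ 2 * N / L := by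
    field_simp
  rw [hrhs]
  linarith

/-- **Divisor bound for function fields.** There is a constant `C = C(q)` such that every
nonzero polynomial `f ∈ 𝔽_q[t]` of degree `N ≥ 2` has at most `q^{C·N/log N}` monic
divisors. -/
theorem divisor_bound_function_fields (q : ℕ) (hq : IsPrimePow q) :
    ∃ C : ℝ, 0 < C ∧ ∀ (F : Type) [Field F] [Fintype F], Fintype.card F = q →
      ∀ f : Polynomial F, f ≠ 0 → 2 ≤ f.natDegree →
        (Nat.card {d : Polynomial F // d.Monic ∧ d ∣ f} : ℝ) ≤
          (q : ℝ) ^ (C * (f.natDegree : ℝ) / Real.log (f.natDegree : ℝ)) := by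
  have hq2 : 2 ≤ q := hq.two_le
  have hq1 : (1 : ℝ) < q := by exact_mod_cast hq2
  have hlq : 0 < Real.log q := Real.log_pos hq1
  refine ⟨128 * q / Real.log q + 2 * Real.log q, by positivity, ?_⟩
  intro F _ _ hF f hf hN
  classical
  set N := f.natDegree with hNdef
  set K : ℕ := ⌈Real.log N / (2 * Real.log q)⌉₊ with hKdef
  have hL : 0 < Real.log N :=
    Real.log_pos (by exact_mod_cast lt_of_lt_of_le one_lt_two hN)
  have hK2 : Real.log N / (2 * Real.log q) ≤ (K : ℝ) := Nat.le_ceil _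
  have hK1 : (K : ℝ) ≤ Real.log N / (2 * Real.log q) + 1 :=
    le_of_lt (Nat.ceil_lt_add_one (by positivity))
  -- factorization
  set m := normalizedFactors f with hm
  have hmem : ∀ p ∈ m, Irreducible p ∧ p.Monic := by
    intro p hp
    have hirr := irreducible_of_normalized_factor p hp
    refine ⟨hirr, ?_⟩
    rw [← normalize_normalized_factor p hp]
    exact Polynomial.monic_normalize hirr.ne_zero
  have h0m : (0 : Polynomial F) ∉ m := fun hc => (hmem 0 hc).1.ne_zero rfl
  have hdegsum : (m.map Polynomial.natDegree).sum = N := by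
    have hassoc : Associated m.prod f := prod_normalizedFactors hf
    have h1 : m.prod.natDegree = N := by
      have := Polynomial.degree_eq_degree_of_associated hassoc
      rw [hNdef]
      unfold Polynomial.natDegree
      rw [this]
    rw [← Polynomial.natDegree_multiset_prod m h0m, h1]
  have hcardm : Multiset.card m ≤ N := by
    have := Multiset.card_nsmul_le_sum (s := m.map Polynomial.natDegree) (a := 1)
      (by rintro x hx
          obtain ⟨p, hp, rfl⟩ := Multiset.mem_map.mp hx
          exact (hmem p hp).1.natDegree_pos)
    simpa [hdegsum, Multiset.card_map] using this
  -- split into small/large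
  set P : Polynomial F → Prop := fun p => p.natDegree < K with hP
  set msmall := m.filter P with hms
  set mlarge := m.filter (fun p => ¬ P p) with hml
  set a := Multiset.card mlarge with hadef
  have haK : a * K ≤ N := by
    have hsum : (mlarge.map Polynomial.natDegree).sum ≤ N := by
      rw [← hdegsum]
      exact multiset_sum_le_sum (Multiset.map_le_map (Multiset.filter_le _ m))
    have := Multiset.card_nsmul_le_sum (s := mlarge.map Polynomial.natDegree) (a := K)
      (by rintro x hx
          obtain ⟨p, hp, rfl⟩ := Multiset.mem_map.mp hx
          exact le_of_not_gt ((Multiset.mem_filter.mp hp).2))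
    calc a * K = Multiset.card (mlarge.map Polynomial.natDegree) • K := by
          rw [Multiset.card_map, smul_eq_mul, mul_comm]
      _ ≤ (mlarge.map Polynomial.natDegree).sum := this
      _ ≤ N := hsum
  have hsmallcard : msmall.toFinset.card ≤ q ^ K := by
    have := card_small_degree K msmall.toFinset
      (by intro p hp
          exact (Multiset.mem_filter.mp (Multiset.mem_toFinset.mp hp)).2)
    rwa [hF] at this
  -- nat counting
  have hnat : Nat.card {d : Polynomial F // d.Monic ∧ d ∣ f} ≤
      (N + 1) ^ (q ^ K) * 2 ^ a := by
    calc Nat.card {d : Polynomial F // d.Monic ∧ d ∣ f}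
        ≤ Nat.card {s : Multiset (Polynomial F) // s ≤ m} := divisors_inj f hf
      _ ≤ Nat.card {s : Multiset (Polynomial F) // s ≤ msmall} *
            Nat.card {s : Multiset (Polynomial F) // s ≤ mlarge} :=
          nat_card_sub_split m P
      _ ≤ (N + 1) ^ (q ^ K) * 2 ^ a := by
          apply Nat.mul_le_mul
          · calc Nat.card {s : Multiset (Polynomial F) // s ≤ msmall}
                ≤ (Multiset.card msmall + 1) ^ msmall.toFinset.card :=
                  nat_card_sub_le_count msmall
              _ ≤ (N + 1) ^ msmall.toFinset.card :=
                  Nat.pow_le_pow_left (Nat.succ_le_succ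
                    ((Multiset.card_le_card (Multiset.filter_le _ m)).trans hcardm)) _
              _ ≤ (N + 1) ^ (q ^ K) :=
                  Nat.pow_le_pow_right (Nat.succ_pos _) hsmallcard
          · exact nat_card_sub_le_two_pow mlarge
  -- pass to reals
  calc (Nat.card {d : Polynomial F // d.Monic ∧ d ∣ f} : ℝ)
      ≤ (((N + 1) ^ (q ^ K) * 2 ^ a : ℕ) : ℝ) := by exact_mod_cast hnat
    _ = ((N : ℝ) + 1) ^ (q ^ K) * 2 ^ a := by push_cast; ring
    _ ≤ (q : ℝ) ^ ((128 * q / Real.log q + 2 * Real.log q) * N / Real.log N) :=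
        analytic_bound q N K a hq2 hN hK1 hK2 haK
end
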